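/- Let b be a holomorphic map of the open unit disk 𝔻 ⊂ ℂ into the closed unit disk (|b(z)| ≤ 1 for all z ∈ 𝔻). Then the de Branges–Rovnyak kernel (z,w) ↦ (1 − b(z)·conj(b(w)))/(1 − z·conj(w)) is positive semidefinite on 𝔻. -/

import Mathlib

open Complex Metric ComplexConjugate intervalIntegral
open scoped ComplexOrder Real

noncomputable section

namespace DBRAux

lemma one_sub_ne_zero {d : ℂ} (hd : ‖d‖ < 1) : (1:ℂ) - d ≠ 0 := by
  intro h
  rw [sub_eq_zero] at h
  rw [← h] at hd
  simp at hd

lemma mul_nonneg' {a : ℝ} (ha : 0 ≤ a) {z : ℂ} (hz : 0 ≤ z) : 0 ≤ (a:ℂ) * z := by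
  rw [Complex.nonneg_iff] at hz ⊢
  refine ⟨?_, ?_⟩
  · simp only [Complex.mul_re, Complex.ofReal_re, Complex.ofReal_im, zero_mul, sub_zero]
    exact mul_nonneg ha hz.1
  · simp [Complex.mul_im, ← hz.2]

lemma conj_szego (ρ : ℝ) (hρ : 0 < ρ) (t : ℝ) {w : ℂ} (hw : ‖w‖ < ρ) :
    conj ((1 - circleMap 0 ρ t * conj w / (ρ:ℂ)^2)⁻¹)
      = circleMap 0 ρ t * (circleMap 0 ρ t - w)⁻¹ := by
  set z := circleMap 0 ρ t with hz
  have hzabs : ‖z‖ = ρ := by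
    rw [hz, norm_circleMap_zero, abs_of_pos hρ]
  have hz0 : z ≠ 0 := by
    intro h; rw [h] at hzabs; simp at hzabs; exact hρ.ne' hzabs.symm
  have hzw : z - w ≠ 0 := by
    intro h
    rw [sub_eq_zero] at h
    rw [← h, hzabs] at hw; exact lt_irrefl _ hw
  have hmul : z * conj z = (ρ:ℂ)^2 := by
    rw [Complex.mul_conj, Complex.normSq_eq_norm_sq, hzabs]; norm_cast
  have hρ0 : ((ρ:ℂ))^2 ≠ 0 :=
    pow_ne_zero 2 (by exact_mod_cast hρ.ne' : (ρ:ℂ) ≠ 0)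
  rw [map_inv₀]
  have key : conj (1 - z * conj w / (ρ:ℂ)^2) = (z - w) / z := by
    have h2 : conj ((ρ:ℂ)^2) = (ρ:ℂ)^2 := by
      rw [map_pow, Complex.conj_ofReal]
    simp only [map_sub, map_one, map_div₀, map_mul, Complex.conj_conj, h2]
    field_simp
    linear_combination (-w) * hmul
  rw [key, inv_div, div_eq_mul_inv]

lemma reproducing (ρ : ℝ) (hρ : 0 < ρ) {f : ℂ → ℂ}
    (hf : DiffContOnCl ℂ f (ball (0:ℂ) ρ)) {w : ℂ} (hw : ‖w‖ < ρ) :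
    ∫ t in (0:ℝ)..(2*π), f (circleMap 0 ρ t) *
      conj ((1 - circleMap 0 ρ t * conj w / (ρ:ℂ)^2)⁻¹)
      = 2 * (π:ℂ) * f w := by
  have hwball : w ∈ ball (0:ℂ) ρ := by simpa [mem_ball, dist_eq_norm] using hw
  have hC := hf.circleIntegral_sub_inv_smul hwball
  rw [circleIntegral] at hC
  simp only [deriv_circleMap, smul_eq_mul] at hC
  have h1 : ∀ t ∈ Set.uIcc (0:ℝ) (2*π), circleMap 0 ρ t * I * ((circleMap 0 ρ t - w)⁻¹ * f (circleMap 0 ρ t))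
      = I * (f (circleMap 0 ρ t) * conj ((1 - circleMap 0 ρ t * conj w / (ρ:ℂ)^2)⁻¹)) := by
    intro t _; rw [conj_szego ρ hρ t hw]; ring
  rw [intervalIntegral.integral_congr h1, intervalIntegral.integral_const_mul] at hC
  have h2 : (2*(π:ℂ)*I*f w) = I * (2*(π:ℂ)*f w) := by ring
  rw [h2] at hC
  exact mul_left_cancel₀ I_ne_zero hC

lemma intervalIntegral_conj {f : ℝ → ℂ} {a b : ℝ} :
    ∫ x in a..b, conj (f x) = conj (∫ x in a..b, f x) := by
  simp only [intervalIntegral, ← _root_.integral_conj, map_sub]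

lemma step (b : ℂ → ℂ) (hb_holo : DifferentiableOn ℂ b (ball (0:ℂ) 1))
    (hb_maps : ∀ z ∈ ball (0:ℂ) 1, ‖b z‖ ≤ 1)
    {n : ℕ} (x : Fin n → ℂ) (c : Fin n → ℂ)
    {ρ : ℝ} (hρ0 : 0 < ρ) (hρ1 : ρ < 1) (hx : ∀ i, ‖x i‖ < ρ) :
    0 ≤ ∑ i, ∑ j, c i * conj (c j) *
      ((1 - b (x i) * conj (b (x j))) * (1 - x i * conj (x j) / (ρ:ℂ)^2)⁻¹) := by
  have hsub1 : closedBall (0:ℂ) ρ ⊆ ball 0 1 := closedBall_subset_ball hρ1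
  have hclos : closure (ball (0:ℂ) ρ) = closedBall 0 ρ := closure_ball 0 hρ0.ne'
  -- a generic conversion
  have toD : ∀ {f : ℂ → ℂ}, DifferentiableOn ℂ f (closedBall (0:ℂ) ρ) →
      DiffContOnCl ℂ f (ball (0:ℂ) ρ) := by
    intro f hf
    exact DifferentiableOn.diffContOnCl (by rw [hclos]; exact hf)
  set K : Fin n → ℂ → ℂ := fun j ζ => (1 - ζ * conj (x j) / (ρ:ℂ)^2)⁻¹ with hK
  have hKd : ∀ j, DifferentiableOn ℂ (K j) (closedBall (0:ℂ) ρ) := by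
    intro j
    apply DifferentiableOn.inv
    · exact ((differentiableOn_const _).sub
        ((differentiable_id.mul_const _).differentiableOn.div_const _))
    · intro ζ hζ
      apply one_sub_ne_zero
      rw [mem_closedBall, dist_zero_right] at hζ
      rw [norm_div, norm_mul, RCLike.norm_conj]
      have h1 : ‖ζ‖ * ‖x j‖ < ρ * ρ :=
        mul_lt_mul_of_nonneg_of_pos' hζ (hx j) (norm_nonneg _) hρ0
      have h2 : ‖((ρ:ℂ))^2‖ = ρ * ρ := by
        rw [norm_pow, Complex.norm_real, Real.norm_of_nonneg hρ0.le, sq]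
      rw [h2]
      exact (div_lt_one (by positivity)).2 h1
  have hKD : ∀ j, DiffContOnCl ℂ (K j) (ball (0:ℂ) ρ) := fun j => toD (hKd j)
  have hbd : DifferentiableOn ℂ b (closedBall (0:ℂ) ρ) := hb_holo.mono hsub1
  set u : ℂ → ℂ := fun ζ => ∑ j, conj (c j) * K j ζ with hu
  set v : ℂ → ℂ := fun ζ => ∑ j, conj (c j * b (x j)) * K j ζ with hv
  set bv : ℂ → ℂ := fun ζ => b ζ * v ζ with hbv
  have hud : DifferentiableOn ℂ u (closedBall (0:ℂ) ρ) :=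
    by
    simpa [hu, Finset.sum_fn] using DifferentiableOn.sum (u := Finset.univ) fun j _ => (hKd j).const_mul (conj (c j))
  have hvd : DifferentiableOn ℂ v (closedBall (0:ℂ) ρ) :=
    by
    simpa [hv, Finset.sum_fn] using DifferentiableOn.sum (u := Finset.univ) fun j _ => (hKd j).const_mul (conj (c j * b (x j)))
  have hbvd : DifferentiableOn ℂ bv (closedBall (0:ℂ) ρ) := hbd.mul hvd
  have huD := toD hud
  have hvD := toD hvd
  have hbvD := toD hbvd
  have hwD : DiffContOnCl ℂ (fun ζ => u ζ - bv ζ) (ball (0:ℂ) ρ) := toD (hud.sub hbvd)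
  -- continuity on the circle
  have hcmmem : ∀ t : ℝ, circleMap 0 ρ t ∈ closedBall (0:ℂ) ρ :=
    fun t => circleMap_mem_closedBall 0 hρ0.le t
  have hcont : ∀ {f : ℂ → ℂ}, DiffContOnCl ℂ f (ball (0:ℂ) ρ) →
      Continuous (fun t => f (circleMap 0 ρ t)) := by
    intro f hf
    have h := hf.continuousOn
    rw [hclos] at h
    exact h.comp_continuous (continuous_circleMap 0 ρ) hcmmem
  have intble : ∀ {F G : ℝ → ℂ}, Continuous F → Continuous G →
      IntervalIntegrable (fun t => F t * conj (G t)) MeasureTheory.volume 0 (2*π) :=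
    fun hF hG => (hF.mul (Complex.continuous_conj.comp hG)).intervalIntegrable _ _
  -- sesquilinear expansion against a combination of Szegő kernels
  have hJu : ∀ {f : ℂ → ℂ}, DiffContOnCl ℂ f (ball (0:ℂ) ρ) → ∀ d : Fin n → ℂ,
      (∫ t in (0:ℝ)..(2*π), f (circleMap 0 ρ t) *
        conj (∑ j, conj (d j) * K j (circleMap 0 ρ t)))
        = 2 * (π:ℂ) * ∑ j, d j * f (x j) := by
    intro f hf d
    have h1 : ∀ t ∈ Set.uIcc (0:ℝ) (2*π),
        f (circleMap 0 ρ t) * conj (∑ j, conj (d j) * K j (circleMap 0 ρ t))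
          = ∑ j, d j * (f (circleMap 0 ρ t) * conj (K j (circleMap 0 ρ t))) := by
      intro t _
      rw [map_sum, Finset.mul_sum]
      refine Finset.sum_congr rfl fun j _ => ?_
      rw [map_mul, Complex.conj_conj]; ring
    have hsum := intervalIntegral.integral_finset_sum (μ := MeasureTheory.volume)
      (a := (0:ℝ)) (b := 2*π) (s := Finset.univ)
      (f := fun j t => d j * (f (circleMap 0 ρ t) * conj (K j (circleMap 0 ρ t))))
      (fun j _ => (continuous_const.mul ((hcont hf).mul
        (Complex.continuous_conj.comp (hcont (hKD j))))).intervalIntegrable _ _)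
    rw [intervalIntegral.integral_congr h1, hsum]
    rw [Finset.mul_sum]
    refine Finset.sum_congr rfl fun j _ => ?_
    rw [intervalIntegral.integral_const_mul]
    have hrep := reproducing ρ hρ0 hf (hx j)
    simp only [hK]
    rw [hrep]
    ring
  -- shorthand
  have cu : Continuous (fun t => u (circleMap 0 ρ t)) := hcont huD
  have cv : Continuous (fun t => v (circleMap 0 ρ t)) := hcont hvD
  have cbv : Continuous (fun t => bv (circleMap 0 ρ t)) := hcont hbvD
  have hJuu : (∫ t in (0:ℝ)..(2*π), u (circleMap 0 ρ t) * conj (u (circleMap 0 ρ t)))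
      = 2*(π:ℂ) * ∑ i, c i * u (x i) := hJu huD c
  have hJvv : (∫ t in (0:ℝ)..(2*π), v (circleMap 0 ρ t) * conj (v (circleMap 0 ρ t)))
      = 2*(π:ℂ) * ∑ i, (c i * b (x i)) * v (x i) := hJu hvD (fun i => c i * b (x i))
  have hJbvu : (∫ t in (0:ℝ)..(2*π), bv (circleMap 0 ρ t) * conj (u (circleMap 0 ρ t)))
      = 2*(π:ℂ) * ∑ i, c i * bv (x i) := hJu hbvD c
  have hvveq : (2:ℂ)*(π:ℂ) * ∑ i, (c i * b (x i)) * v (x i) = 2*(π:ℂ) * ∑ i, c i * bv (x i) := by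
    congr 1
    refine Finset.sum_congr rfl fun i _ => ?_
    simp only [hbv]; ring
  -- self integrals are real
  have hself : ∀ (f : ℂ → ℂ),
      (∫ t in (0:ℝ)..(2*π), f (circleMap 0 ρ t) * conj (f (circleMap 0 ρ t)))
        = (((∫ t in (0:ℝ)..(2*π), Complex.normSq (f (circleMap 0 ρ t))) : ℝ) : ℂ) := by
    intro f
    rw [← intervalIntegral.integral_ofReal]
    apply intervalIntegral.integral_congr
    intro t _
    exact (Complex.mul_conj _)
  have hnn : ∀ g : ℝ → ℝ, (∀ t, 0 ≤ g t) → 0 ≤ (∫ t in (0:ℝ)..(2*π), g t) := fun g hg =>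
    intervalIntegral.integral_nonneg (by positivity) (fun t _ => hg t)
  -- conjugate symmetry
  have hconjJ : ∀ f g : ℂ → ℂ,
      (∫ t in (0:ℝ)..(2*π), f (circleMap 0 ρ t) * conj (g (circleMap 0 ρ t)))
        = conj (∫ t in (0:ℝ)..(2*π), g (circleMap 0 ρ t) * conj (f (circleMap 0 ρ t))) := by
    intro f g
    rw [← intervalIntegral_conj]
    apply intervalIntegral.integral_congr
    intro t _
    simp only [map_mul, Complex.conj_conj]
    ring
  have hJvvreal : conj (∫ t in (0:ℝ)..(2*π), v (circleMap 0 ρ t) * conj (v (circleMap 0 ρ t)))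
      = (∫ t in (0:ℝ)..(2*π), v (circleMap 0 ρ t) * conj (v (circleMap 0 ρ t))) := by
    rw [hself v]
    exact Complex.conj_ofReal _
  have hJubv : (∫ t in (0:ℝ)..(2*π), u (circleMap 0 ρ t) * conj (bv (circleMap 0 ρ t)))
      = (∫ t in (0:ℝ)..(2*π), v (circleMap 0 ρ t) * conj (v (circleMap 0 ρ t))) := by
    rw [hconjJ u bv, hJbvu, ← hvveq, ← hJvv, hJvvreal]
  have hJbvu' : (∫ t in (0:ℝ)..(2*π), bv (circleMap 0 ρ t) * conj (u (circleMap 0 ρ t)))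
      = (∫ t in (0:ℝ)..(2*π), v (circleMap 0 ρ t) * conj (v (circleMap 0 ρ t))) := by
    rw [hJbvu, ← hvveq, ← hJvv]
  -- expansion of the square
  have hexp : (∫ t in (0:ℝ)..(2*π),
        (u (circleMap 0 ρ t) - bv (circleMap 0 ρ t)) * conj (u (circleMap 0 ρ t) - bv (circleMap 0 ρ t)))
      = ((∫ t in (0:ℝ)..(2*π), u (circleMap 0 ρ t) * conj (u (circleMap 0 ρ t)))
          - (∫ t in (0:ℝ)..(2*π), u (circleMap 0 ρ t) * conj (bv (circleMap 0 ρ t))))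
        - ((∫ t in (0:ℝ)..(2*π), bv (circleMap 0 ρ t) * conj (u (circleMap 0 ρ t)))
          - (∫ t in (0:ℝ)..(2*π), bv (circleMap 0 ρ t) * conj (bv (circleMap 0 ρ t)))) := by
    have e1 : ∀ t ∈ Set.uIcc (0:ℝ) (2*π),
        (u (circleMap 0 ρ t) - bv (circleMap 0 ρ t)) * conj (u (circleMap 0 ρ t) - bv (circleMap 0 ρ t))
          = (u (circleMap 0 ρ t) * conj (u (circleMap 0 ρ t))
              - u (circleMap 0 ρ t) * conj (bv (circleMap 0 ρ t)))
            - (bv (circleMap 0 ρ t) * conj (u (circleMap 0 ρ t))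
              - bv (circleMap 0 ρ t) * conj (bv (circleMap 0 ρ t))) := by
      intro t _
      rw [map_sub]
      ring
    rw [intervalIntegral.integral_congr e1,
      intervalIntegral.integral_sub ((intble cu cu).sub (intble cu cbv)) ((intble cbv cu).sub (intble cbv cbv)),
      intervalIntegral.integral_sub (intble cu cu) (intble cu cbv),
      intervalIntegral.integral_sub (intble cbv cu) (intble cbv cbv)]
  -- first nonnegative piece
  set r1 : ℝ := ∫ t in (0:ℝ)..(2*π), Complex.normSq (u (circleMap 0 ρ t) - bv (circleMap 0 ρ t)) with hr1def
  have hww : (∫ t in (0:ℝ)..(2*π),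
        (u (circleMap 0 ρ t) - bv (circleMap 0 ρ t)) * conj (u (circleMap 0 ρ t) - bv (circleMap 0 ρ t)))
      = ((r1 : ℝ) : ℂ) := hself (fun ζ => u ζ - bv ζ)
  have hr1 : 0 ≤ r1 := hnn _ (fun t => Complex.normSq_nonneg _)
  -- second nonnegative piece
  set r2 : ℝ := ∫ t in (0:ℝ)..(2*π),
      (1 - Complex.normSq (b (circleMap 0 ρ t))) * Complex.normSq (v (circleMap 0 ρ t)) with hr2def
  have hr2 : 0 ≤ r2 := by
    apply hnn
    intro t
    apply mul_nonneg _ (Complex.normSq_nonneg _)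
    rw [sub_nonneg, Complex.normSq_eq_norm_sq]
    have hmem : circleMap 0 ρ t ∈ ball (0:ℂ) 1 := hsub1 (hcmmem t)
    have := hb_maps _ hmem
    exact pow_le_one₀ (norm_nonneg _) this
  have hdiff : (∫ t in (0:ℝ)..(2*π), v (circleMap 0 ρ t) * conj (v (circleMap 0 ρ t)))
      - (∫ t in (0:ℝ)..(2*π), bv (circleMap 0 ρ t) * conj (bv (circleMap 0 ρ t)))
      = ((r2 : ℝ) : ℂ) := by
    rw [← intervalIntegral.integral_sub (intble cv cv) (intble cbv cbv), hr2def,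
      ← intervalIntegral.integral_ofReal]
    apply intervalIntegral.integral_congr
    intro t _
    simp only [hbv]
    rw [Complex.mul_conj, Complex.mul_conj, Complex.normSq_mul]
    push_cast
    ring
  -- put everything together
  have hX : (∫ t in (0:ℝ)..(2*π), u (circleMap 0 ρ t) * conj (u (circleMap 0 ρ t)))
      - (∫ t in (0:ℝ)..(2*π), v (circleMap 0 ρ t) * conj (v (circleMap 0 ρ t)))
      = ((r1 + r2 : ℝ) : ℂ) := by
    have := hexp
    rw [hww, hJubv, hJbvu'] at this
    push_cast
    rw [← hdiff]
    linear_combination -this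
  -- identify with the goal sum
  have hSX : (2*(π:ℂ)) * (∑ i, ∑ j, c i * conj (c j) *
        ((1 - b (x i) * conj (b (x j))) * (1 - x i * conj (x j) / (ρ:ℂ)^2)⁻¹))
      = (∫ t in (0:ℝ)..(2*π), u (circleMap 0 ρ t) * conj (u (circleMap 0 ρ t)))
        - (∫ t in (0:ℝ)..(2*π), v (circleMap 0 ρ t) * conj (v (circleMap 0 ρ t))) := by
    rw [hJuu, hJvv, ← mul_sub, ← Finset.sum_sub_distrib]
    congr 1
    refine Finset.sum_congr rfl fun i _ => ?_
    simp only [hu, hv, hK]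
    rw [Finset.mul_sum, Finset.mul_sum, ← Finset.sum_sub_distrib]
    refine Finset.sum_congr rfl fun j _ => ?_
    rw [map_mul]
    ring
  have h2π : ((2*(π:ℝ)):ℂ) ≠ 0 := by
    have : (0:ℝ) < 2*π := by positivity
    exact_mod_cast this.ne'
  have hgoal : (∑ i, ∑ j, c i * conj (c j) *
        ((1 - b (x i) * conj (b (x j))) * (1 - x i * conj (x j) / (ρ:ℂ)^2)⁻¹))
      = (((2*π)⁻¹ : ℝ) : ℂ) * ((r1 + r2 : ℝ) : ℂ) := by
    rw [← hX, ← hSX]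
    push_cast
    rw [← mul_assoc, inv_mul_cancel₀ (by simp [Real.pi_ne_zero]), one_mul]
  rw [hgoal]
  exact mul_nonneg' (by positivity) (Complex.zero_le_real.2 (add_nonneg hr1 hr2))

end DBRAux

/-- A kernel `K : X → X → ℂ` is positive semidefinite on a set `S`: for all finite
families of points of `S` and scalars, the associated quadratic form is a
nonnegative real number (using the partial order on `ℂ`). -/
def IsPSDKernelOn {X : Type*} (K : X → X → ℂ) (S : Set X) : Prop :=
  ∀ (n : ℕ) (x : Fin n → X), (∀ i, x i ∈ S) → ∀ c : Fin n → ℂ,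
    0 ≤ ∑ i, ∑ j, c i * conj (c j) * K (x i) (x j)
/-- For a holomorphic map `b` of the disk into the closed unit disk, the
de Branges–Rovnyak kernel `(1 − b(z)·conj(b(w)))/(1 − z·conj w)` is positive
semidefinite on the open unit disk. -/
theorem deBrangesRovnyak_kernel_psd
    (b : ℂ → ℂ)
    (hb_holo : DifferentiableOn ℂ b (ball (0 : ℂ) 1))
    (hb_maps : ∀ z ∈ ball (0 : ℂ) 1, ‖b z‖ ≤ 1) :
    IsPSDKernelOn
      (fun z w => (1 - b z * conj (b w)) / (1 - z * conj w))
      (ball (0 : ℂ) 1) := by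
  intro n x hx c
  simp only [div_eq_mul_inv]
  set m : NNReal := Finset.univ.sup (fun i => ‖x i‖₊) with hm
  have hm1 : (m:ℝ) < 1 := by
    have h : m < 1 := by
      rw [Finset.sup_lt_iff (by norm_num : (⊥ : NNReal) < 1)]
      intro i _
      have := mem_ball_zero_iff.1 (hx i)
      exact_mod_cast this
    exact_mod_cast h
  have hxm : ∀ i, ‖x i‖ ≤ (m:ℝ) := by
    intro i
    have := Finset.le_sup (f := fun i => ‖x i‖₊) (Finset.mem_univ i)
    exact_mod_cast this
  set S : ℝ → ℂ := fun ρ => ∑ i, ∑ j, c i * conj (c j) *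
      ((1 - b (x i) * conj (b (x j))) * (1 - x i * conj (x j) / (ρ:ℂ)^2)⁻¹) with hS
  have hev : ∀ᶠ ρ in nhdsWithin (1:ℝ) (Set.Iio 1), 0 ≤ S ρ := by
    filter_upwards [Ioo_mem_nhdsLT (show (m:ℝ) < 1 from hm1)]
      with ρ hρ
    exact DBRAux.step b hb_holo hb_maps x c (lt_of_le_of_lt m.coe_nonneg hρ.1) hρ.2
      (fun i => lt_of_le_of_lt (hxm i) hρ.1)
  have hterm : ∀ i j : Fin n, Filter.Tendsto (fun ρ:ℝ => (1 - x i * conj (x j) / (ρ:ℂ)^2)⁻¹)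
      (nhdsWithin (1:ℝ) (Set.Iio 1)) (nhds ((1 - x i * conj (x j))⁻¹)) := by
    intro i j
    have hxi := mem_ball_zero_iff.1 (hx i)
    have hxj := mem_ball_zero_iff.1 (hx j)
    have hne : (1:ℂ) - x i * conj (x j) ≠ 0 := by
      apply DBRAux.one_sub_ne_zero
      rw [norm_mul, RCLike.norm_conj]
      calc ‖x i‖ * ‖x j‖ ≤ 1 * ‖x j‖ := by
            apply mul_le_mul_of_nonneg_right hxi.le (norm_nonneg _)
        _ = ‖x j‖ := one_mul _
        _ < 1 := hxj
    have h1 : Filter.Tendsto (fun ρ:ℝ => ((ρ:ℂ))) (nhdsWithin (1:ℝ) (Set.Iio 1)) (nhds 1) :=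
      (Complex.continuous_ofReal.tendsto 1).mono_left nhdsWithin_le_nhds
    have h2 : Filter.Tendsto (fun ρ:ℝ => 1 - x i * conj (x j) / (ρ:ℂ)^2)
        (nhdsWithin (1:ℝ) (Set.Iio 1)) (nhds (1 - x i * conj (x j) / (1:ℂ)^2)) :=
      tendsto_const_nhds.sub (tendsto_const_nhds.div (h1.pow 2) (by norm_num))
    have h3 := h2.inv₀ (by simpa using hne)
    simpa using h3
  have htend : Filter.Tendsto S (nhdsWithin (1:ℝ) (Set.Iio 1))
      (nhds (∑ i, ∑ j, c i * conj (c j) *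
        ((1 - b (x i) * conj (b (x j))) * (1 - x i * conj (x j))⁻¹))) := by
    apply tendsto_finset_sum
    intro i _
    apply tendsto_finset_sum
    intro j _
    exact ((hterm i j).const_mul _).const_mul _
  exact ge_of_tendsto htend hev

end
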